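/- For a multi-agent system M with finite state space, the pair of operators P_a and P_a^f commutes with the unfolding map — i.e., t_M^{-1}(P_a^f(S)) = P_a(t_M^{-1}(S)) for all S ⊆ Q — if and only if M is a-distinguished (Γ_a is an equivalence relation and a congruence). -/

import Mathlib

/-- Appending a state to a chain run, given a transition from its last state. -/
lemma stmt19.chain_concat {Q : Type*} {δ : Q → Q → Prop} :
    ∀ {q0 : Q} {l : List Q} {q' : Q}, List.Chain δ q0 l →
      δ ((q0 :: l).getLast (List.cons_ne_nil _ _)) q' → List.Chain δ q0 (l ++ [q']) := by
  intro q0 l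
  induction l generalizing q0 with
  | nil => intro q' _ h2; simpa [List.Chain, List.isChain_cons_cons] using h2
  | cons a t ih =>
    intro q' h h2
    simp only [List.Chain, List.isChain_cons_cons] at h
    simp only [List.cons_append, List.Chain, List.isChain_cons_cons]
    refine ⟨h.1, ih h.2 ?_⟩
    rwa [List.getLast_cons (List.cons_ne_nil _ _)] at h2

/-- Key induction: a congruence propagates along observation-equal runs. -/
lemma stmt19.keyInd {Q P : Type*} {δ : Q → Q → Prop} {obs : Q → Set P} {G : Q → Q → Prop}
    (hcong : ∀ q r q' r', G q r → δ q q' → δ r r' → obs q' = obs r' → G q' r') :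
    ∀ (l₁ : List Q) {l₂ : List Q} {a b : Q}, List.Chain δ a l₁ → List.Chain δ b l₂ →
      l₁.map obs = l₂.map obs → G a b →
      G ((a :: l₁).getLast (List.cons_ne_nil _ _)) ((b :: l₂).getLast (List.cons_ne_nil _ _)) := by
  intro l₁
  induction l₁ with
  | nil =>
    intro l₂ a b _ _ hm hab
    have : l₂ = [] := by simpa using (List.map_eq_nil_iff.mp hm.symm)
    subst this; exact hab
  | cons q' t ih =>
    intro l₂ a b h1 h2 hm hab
    cases l₂ with
    | nil => simp at hm
    | cons r' t₂ =>
      simp only [List.map_cons, List.cons.injEq] at hm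
      simp only [List.Chain, List.isChain_cons_cons] at h1 h2
      have hG' : G q' r' := hcong a b q' r' hab h1.1 h2.1 hm.1
      rw [List.getLast_cons (List.cons_ne_nil _ _), List.getLast_cons (List.cons_ne_nil _ _)]
      exact ih h1.2 h2.2 hm.2 hG'

/-- For a MAS `M` with finite state space all of whose states are reachable, the
pair `Pₐ / Pₐ^f` commutes with the unfolding map — `t_M⁻¹(Pₐ^f(S)) = Pₐ(t_M⁻¹(S))` for all
`S ⊆ Q` — if and only if `M` is a-distinguished (`Γₐ` is an equivalence relation and a
congruence). -/
theorem stmt19 {Q P : Type*} [Finite Q] (δ : Q → Q → Prop) (q0 : Q)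
    (lab : Q → Set P) (Pa : Set P) :
    let obs : Q → Set P := fun q => lab q ∩ Pa
    let Node := {x : List Q // List.Chain δ q0 x}
    let lastSt : Node → Q := fun x => (q0 :: x.val).getLast (List.cons_ne_nil _ _)
    let sim : Node → Node → Prop := fun x y =>
      (q0 :: x.val).map obs = (q0 :: y.val).map obs
    let Gamma : Q → Q → Prop := fun q r =>
      ∀ x : Node, lastSt x = q → ∃ y : Node, sim x y ∧ lastSt y = r
    let Pf : Set Q → Set Q := fun S => {q | ∃ s ∈ S, Gamma s q}
    let Pt : Set Node → Set Node := fun T => {x | ∃ y : Node, sim x y ∧ y ∈ T}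
    (∀ q : Q, ∃ x : Node, lastSt x = q) →
    ((∀ S : Set Q, lastSt ⁻¹' (Pf S) = Pt (lastSt ⁻¹' S)) ↔
      (Equivalence Gamma ∧
        ∀ q r q' r', Gamma q r → δ q q' → δ r r' → obs q' = obs r' → Gamma q' r')) := by
  intro obs Node lastSt sim Gamma Pf Pt hreach
  -- basic facts about Gamma, independent of any hypothesis
  have hrefl : ∀ q, Gamma q q := fun q x hx => ⟨x, rfl, hx⟩
  have htrans : ∀ {q r s}, Gamma q r → Gamma r s → Gamma q s := by
    intro q r s h1 h2 x hx
    obtain ⟨y, hs1, hy⟩ := h1 x hx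
    obtain ⟨z, hs2, hz⟩ := h2 y hy
    exact ⟨z, hs1.trans hs2, hz⟩
  constructor
  · -- commutation implies distinguished
    intro hcomm
    have hsymm : ∀ {q r}, Gamma q r → Gamma r q := by
      intro q r hqr x hx
      have hx' : x ∈ lastSt ⁻¹' (Pf {q}) := ⟨q, rfl, hx ▸ hqr⟩
      rw [hcomm {q}] at hx'
      obtain ⟨y, hsxy, hy⟩ := hx'
      exact ⟨y, hsxy, hy⟩
    -- key consequence: sim implies Gamma on endpoints
    have hsimG : ∀ x y : Node, sim x y → Gamma (lastSt x) (lastSt y) := by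
      intro x y hsxy
      have hx' : x ∈ Pt (lastSt ⁻¹' {lastSt y}) := ⟨y, hsxy, rfl⟩
      rw [← hcomm {lastSt y}] at hx'
      obtain ⟨s, hs, hG⟩ := hx'
      exact hsymm (hs ▸ hG)
    refine ⟨⟨hrefl, hsymm, htrans⟩, ?_⟩
    intro q r q' r' hqr hdq hdr hobs
    obtain ⟨w, hw⟩ := hreach q
    obtain ⟨v, hsimwv, hv⟩ := hqr w hw
    have hw' : List.Chain δ q0 (w.val ++ [q']) := stmt19.chain_concat w.2 (show δ (lastSt w) q' by rw [hw]; exact hdq)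
    have hv' : List.Chain δ q0 (v.val ++ [r']) := stmt19.chain_concat v.2 (show δ (lastSt v) r' by rw [hv]; exact hdr)
    have hsim' : sim ⟨w.val ++ [q'], hw'⟩ ⟨v.val ++ [r'], hv'⟩ := by
      show (q0 :: (w.val ++ [q'])).map obs = (q0 :: (v.val ++ [r'])).map obs
      have : (q0 :: w.val).map obs = (q0 :: v.val).map obs := hsimwv
      simp only [← List.cons_append, List.map_append, this, List.map_cons, List.map_nil, hobs]
    have := hsimG _ _ hsim'
    have hl1 : lastSt ⟨w.val ++ [q'], hw'⟩ = q' := by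
      show ((q0 :: w.val) ++ [q']).getLast _ = q'
      exact List.getLast_concat
    have hl2 : lastSt ⟨v.val ++ [r'], hv'⟩ = r' := by
      show ((q0 :: v.val) ++ [r']).getLast _ = r'
      exact List.getLast_concat
    rwa [hl1, hl2] at this
  · -- distinguished implies commutation
    rintro ⟨hequiv, hcong⟩ S
    have hsimG : ∀ x y : Node, sim x y → Gamma (lastSt x) (lastSt y) := by
      intro x y hsxy
      have hm : x.val.map obs = y.val.map obs := by
        have : obs q0 :: x.val.map obs = obs q0 :: y.val.map obs := hsxy
        exact (List.cons.injEq _ _ _ _).mp this |>.2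
      exact stmt19.keyInd hcong x.val x.2 y.2 hm (hequiv.refl q0)
    ext x
    constructor
    · rintro ⟨s, hs, hG⟩
      obtain ⟨y, hsxy, hy⟩ := hequiv.symm hG x rfl
      exact ⟨y, hsxy, show lastSt y ∈ S from hy.symm ▸ hs⟩
    · rintro ⟨y, hsxy, hyS⟩
      exact ⟨lastSt y, hyS, hequiv.symm (hsimG x y hsxy)⟩
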